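/- For the 8×8 matrix M_P, the left eigenvector (1,1,1,1,1,1,1,1) with eigenvalue 16 is unique up to scaling among nonnegative left eigenvectors, and the right eigenvector (1,1,1,1,1,1,1,1)ᵗ with eigenvalue 16 is unique up to scaling among nonnegative right eigenvectors (Perron–Frobenius uniqueness for the primitive matrix M_P). -/
import Mathlib


def MPR : Matrix (Fin 8) (Fin 8) ℝ :=
  !![1,1,1,1,3,3,3,3;
     9,5,2,0,0,0,0,0;
     0,4,6,6,0,0,0,0;
     0,0,1,3,3,3,3,3;
     3,3,3,3,1,1,1,1;
     0,0,0,0,9,5,2,0;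
     0,0,0,0,0,4,6,6;
     3,3,3,3,0,0,1,3]

lemma MPR_00 : MPR 0 0 = 1 := rfl
lemma MPR_01 : MPR 0 1 = 1 := rfl
lemma MPR_02 : MPR 0 2 = 1 := rfl
lemma MPR_03 : MPR 0 3 = 1 := rfl
lemma MPR_04 : MPR 0 4 = 3 := rfl
lemma MPR_05 : MPR 0 5 = 3 := rfl
lemma MPR_06 : MPR 0 6 = 3 := rfl
lemma MPR_07 : MPR 0 7 = 3 := rfl
lemma MPR_10 : MPR 1 0 = 9 := rfl
lemma MPR_11 : MPR 1 1 = 5 := rfl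
lemma MPR_12 : MPR 1 2 = 2 := rfl
lemma MPR_13 : MPR 1 3 = 0 := rfl
lemma MPR_14 : MPR 1 4 = 0 := rfl
lemma MPR_15 : MPR 1 5 = 0 := rfl
lemma MPR_16 : MPR 1 6 = 0 := rfl
lemma MPR_17 : MPR 1 7 = 0 := rfl
lemma MPR_20 : MPR 2 0 = 0 := rfl
lemma MPR_21 : MPR 2 1 = 4 := rfl
lemma MPR_22 : MPR 2 2 = 6 := rfl
lemma MPR_23 : MPR 2 3 = 6 := rfl
lemma MPR_24 : MPR 2 4 = 0 := rfl
lemma MPR_25 : MPR 2 5 = 0 := rfl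
lemma MPR_26 : MPR 2 6 = 0 := rfl
lemma MPR_27 : MPR 2 7 = 0 := rfl
lemma MPR_30 : MPR 3 0 = 0 := rfl
lemma MPR_31 : MPR 3 1 = 0 := rfl
lemma MPR_32 : MPR 3 2 = 1 := rfl
lemma MPR_33 : MPR 3 3 = 3 := rfl
lemma MPR_34 : MPR 3 4 = 3 := rfl
lemma MPR_35 : MPR 3 5 = 3 := rfl
lemma MPR_36 : MPR 3 6 = 3 := rfl
lemma MPR_37 : MPR 3 7 = 3 := rfl
lemma MPR_40 : MPR 4 0 = 3 := rfl
lemma MPR_41 : MPR 4 1 = 3 := rfl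
lemma MPR_42 : MPR 4 2 = 3 := rfl
lemma MPR_43 : MPR 4 3 = 3 := rfl
lemma MPR_44 : MPR 4 4 = 1 := rfl
lemma MPR_45 : MPR 4 5 = 1 := rfl
lemma MPR_46 : MPR 4 6 = 1 := rfl
lemma MPR_47 : MPR 4 7 = 1 := rfl
lemma MPR_50 : MPR 5 0 = 0 := rfl
lemma MPR_51 : MPR 5 1 = 0 := rfl
lemma MPR_52 : MPR 5 2 = 0 := rfl
lemma MPR_53 : MPR 5 3 = 0 := rfl
lemma MPR_54 : MPR 5 4 = 9 := rfl
lemma MPR_55 : MPR 5 5 = 5 := rfl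
lemma MPR_56 : MPR 5 6 = 2 := rfl
lemma MPR_57 : MPR 5 7 = 0 := rfl
lemma MPR_60 : MPR 6 0 = 0 := rfl
lemma MPR_61 : MPR 6 1 = 0 := rfl
lemma MPR_62 : MPR 6 2 = 0 := rfl
lemma MPR_63 : MPR 6 3 = 0 := rfl
lemma MPR_64 : MPR 6 4 = 0 := rfl
lemma MPR_65 : MPR 6 5 = 4 := rfl
lemma MPR_66 : MPR 6 6 = 6 := rfl
lemma MPR_67 : MPR 6 7 = 6 := rfl
lemma MPR_70 : MPR 7 0 = 3 := rfl
lemma MPR_71 : MPR 7 1 = 3 := rfl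
lemma MPR_72 : MPR 7 2 = 3 := rfl
lemma MPR_73 : MPR 7 3 = 3 := rfl
lemma MPR_74 : MPR 7 4 = 0 := rfl
lemma MPR_75 : MPR 7 5 = 0 := rfl
lemma MPR_76 : MPR 7 6 = 1 := rfl
lemma MPR_77 : MPR 7 7 = 3 := rfl

/-- Perron–Frobenius uniqueness for the primitive matrix `M_P`: the
all-ones vector is a left and right eigenvector for the eigenvalue 16, and
every nonnegative nonzero left (resp. right) eigenvector for the
eigenvalue 16 is a positive scalar multiple of it. -/
theorem MP_PF_uniqueness :
    Matrix.vecMul (fun _ => (1:ℝ)) MPR = (16 : ℝ) • (fun _ => (1:ℝ)) ∧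
    MPR.mulVec (fun _ => (1:ℝ)) = (16 : ℝ) • (fun _ => (1:ℝ)) ∧
    (∀ v : Fin 8 → ℝ, (∀ i, 0 ≤ v i) → v ≠ 0 →
      Matrix.vecMul v MPR = (16 : ℝ) • v → ∃ c : ℝ, 0 < c ∧ v = c • (fun _ => (1:ℝ))) ∧
    (∀ v : Fin 8 → ℝ, (∀ i, 0 ≤ v i) → v ≠ 0 →
      MPR.mulVec v = (16 : ℝ) • v → ∃ c : ℝ, 0 < c ∧ v = c • (fun _ => (1:ℝ))) := by
  refine ⟨?_, ?_, ?_, ?_⟩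
  · funext j
    fin_cases j <;>
      norm_num [show ((⟨0, by norm_num⟩ : Fin 8)) = 0 from rfl, show ((⟨1, by norm_num⟩ : Fin 8)) = 1 from rfl, show ((⟨2, by norm_num⟩ : Fin 8)) = 2 from rfl, show ((⟨3, by norm_num⟩ : Fin 8)) = 3 from rfl, show ((⟨4, by norm_num⟩ : Fin 8)) = 4 from rfl, show ((⟨5, by norm_num⟩ : Fin 8)) = 5 from rfl, show ((⟨6, by norm_num⟩ : Fin 8)) = 6 from rfl, show ((⟨7, by norm_num⟩ : Fin 8)) = 7 from rfl, Matrix.vecMul, dotProduct, Fin.sum_univ_eight, MPR_00, MPR_01, MPR_02, MPR_03, MPR_04, MPR_05, MPR_06, MPR_07, MPR_10, MPR_11, MPR_12, MPR_13, MPR_14, MPR_15, MPR_16, MPR_17, MPR_20, MPR_21, MPR_22, MPR_23, MPR_24, MPR_25, MPR_26, MPR_27, MPR_30, MPR_31, MPR_32, MPR_33, MPR_34, MPR_35, MPR_36, MPR_37, MPR_40, MPR_41, MPR_42, MPR_43, MPR_44, MPR_45, MPR_46, MPR_47, MPR_50, MPR_51, MPR_52, MPR_53, MPR_54, MPR_55,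 MPR_56, MPR_57, MPR_60, MPR_61, MPR_62, MPR_63, MPR_64, MPR_65, MPR_66, MPR_67, MPR_70, MPR_71, MPR_72, MPR_73, MPR_74, MPR_75, MPR_76, MPR_77]
  · funext i
    fin_cases i <;>
      norm_num [show ((⟨0, by norm_num⟩ : Fin 8)) = 0 from rfl, show ((⟨1, by norm_num⟩ : Fin 8)) = 1 from rfl, show ((⟨2, by norm_num⟩ : Fin 8)) = 2 from rfl, show ((⟨3, by norm_num⟩ : Fin 8)) = 3 from rfl, show ((⟨4, by norm_num⟩ : Fin 8)) = 4 from rfl, show ((⟨5, by norm_num⟩ : Fin 8)) = 5 from rfl, show ((⟨6, by norm_num⟩ : Fin 8)) = 6 from rfl, show ((⟨7, by norm_num⟩ : Fin 8)) = 7 from rfl, Matrix.mulVec, dotProduct, Fin.sum_univ_eight, MPR_00, MPR_01, MPR_02, MPR_03, MPR_04, MPR_05, MPR_06, MPR_07, MPR_10, MPR_11, MPR_12, MPR_13, MPR_14, MPR_15, MPR_16, MPR_17, MPR_20, MPR_21, MPR_22, MPR_23, MPR_24, MPR_25, MPR_26, MPR_27, MPR_30, MPR_31, MPR_32, MPR_33,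 MPR_34, MPR_35, MPR_36, MPR_37, MPR_40, MPR_41, MPR_42, MPR_43, MPR_44, MPR_45, MPR_46, MPR_47, MPR_50, MPR_51, MPR_52, MPR_53, MPR_54, MPR_55, MPR_56, MPR_57, MPR_60, MPR_61, MPR_62, MPR_63, MPR_64, MPR_65, MPR_66, MPR_67, MPR_70, MPR_71, MPR_72, MPR_73, MPR_74, MPR_75, MPR_76, MPR_77]
  · intro v hv hne h
    have h0 := congrFun h 0
    have h1 := congrFun h 1
    have h2 := congrFun h 2
    have h3 := congrFun h 3
    have h4 := congrFun h 4
    have h5 := congrFun h 5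
    have h6 := congrFun h 6
    have h7 := congrFun h 7
    simp only [Matrix.vecMul, dotProduct, Fin.sum_univ_eight, Pi.smul_apply,
      smul_eq_mul, MPR_00, MPR_01, MPR_02, MPR_03, MPR_04, MPR_05, MPR_06, MPR_07, MPR_10, MPR_11, MPR_12, MPR_13, MPR_14, MPR_15, MPR_16, MPR_17, MPR_20, MPR_21, MPR_22, MPR_23, MPR_24, MPR_25, MPR_26, MPR_27, MPR_30, MPR_31, MPR_32, MPR_33, MPR_34, MPR_35, MPR_36, MPR_37, MPR_40, MPR_41, MPR_42, MPR_43, MPR_44, MPR_45, MPR_46, MPR_47, MPR_50, MPR_51, MPR_52, MPR_53, MPR_54, MPR_55, MPR_56, MPR_57, MPR_60, MPR_61, MPR_62, MPR_63, MPR_64, MPR_65, MPR_66, MPR_67, MPR_70, MPR_71, MPR_72, MPR_73, MPR_74, MPR_75, MPR_76, MPR_77] at h0 h1 h2 h3 h4 h5 h6 h7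
    have e1 : v 1 = v 0 := by linarith
    have e2 : v 2 = v 0 := by linarith
    have e3 : v 3 = v 0 := by linarith
    have e4 : v 4 = v 0 := by linarith
    have e5 : v 5 = v 0 := by linarith
    have e6 : v 6 = v 0 := by linarith
    have e7 : v 7 = v 0 := by linarith
    refine ⟨v 0, ?_, ?_⟩
    · rcases lt_or_eq_of_le (hv 0) with hp | hp
      · exact hp
      · exfalso; apply hne; funext i
        fin_cases i <;> simp [e1, e2, e3, e4, e5, e6, e7, ← hp]
    · funext i
      fin_cases i <;> simp [e1, e2, e3, e4, e5, e6, e7]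
  · intro v hv hne h
    have h0 := congrFun h 0
    have h1 := congrFun h 1
    have h2 := congrFun h 2
    have h3 := congrFun h 3
    have h4 := congrFun h 4
    have h5 := congrFun h 5
    have h6 := congrFun h 6
    have h7 := congrFun h 7
    simp only [Matrix.mulVec, dotProduct, Fin.sum_univ_eight, Pi.smul_apply,
      smul_eq_mul, MPR_00, MPR_01, MPR_02, MPR_03, MPR_04, MPR_05, MPR_06, MPR_07, MPR_10, MPR_11, MPR_12, MPR_13, MPR_14, MPR_15, MPR_16, MPR_17, MPR_20, MPR_21, MPR_22, MPR_23, MPR_24, MPR_25, MPR_26, MPR_27, MPR_30, MPR_31, MPR_32, MPR_33, MPR_34, MPR_35, MPR_36, MPR_37, MPR_40, MPR_41, MPR_42, MPR_43, MPR_44, MPR_45, MPR_46, MPR_47, MPR_50, MPR_51, MPR_52, MPR_53, MPR_54, MPR_55, MPR_56, MPR_57, MPR_60, MPR_61, MPR_62, MPR_63, MPR_64, MPR_65, MPR_66, MPR_67, MPR_70, MPR_71, MPR_72, MPR_73, MPR_74, MPR_75, MPR_76, MPR_77] at h0 h1 h2 h3 h4 h5 h6 h7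
    have e1 : v 1 = v 0 := by linarith
    have e2 : v 2 = v 0 := by linarith
    have e3 : v 3 = v 0 := by linarith
    have e4 : v 4 = v 0 := by linarith
    have e5 : v 5 = v 0 := by linarith
    have e6 : v 6 = v 0 := by linarith
    have e7 : v 7 = v 0 := by linarith
    refine ⟨v 0, ?_, ?_⟩
    · rcases lt_or_eq_of_le (hv 0) with hp | hp
      · exact hp
      · exfalso; apply hne; funext i
        fin_cases i <;> simp [e1, e2, e3, e4, e5, e6, e7, ← hp]
    · funext i
      fin_cases i <;> simp [e1, e2, e3, e4, e5, e6, e7]
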